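/- The discrete Gaussian is sub-Gaussian with parameter σ²: For every real σ > 0 and every real t, if X is distributed according to the discrete Gaussian N_ℤ(σ²), then the moment generating function satisfies E[exp(t·X)] ≤ exp(σ²·t²/2). -/

import Mathlib

open Complex Real

/-- Summability of shifted Gaussians over ℤ. -/
lemma summable_exp_lin_quad (t : ℝ) {c : ℝ} (hc : 0 < c) :
    Summable (fun n : ℤ ↦ Real.exp (t * n - c * n ^ 2)) := by
  have h := summable_pow_mul_jacobiTheta₂_term_bound (|t| / (2 * π)) (T := c / π)
      (div_pos hc pi_pos) 0
  refine h.of_nonneg_of_le (fun n ↦ (Real.exp_pos _).le) (fun n ↦ ?_)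
  rw [pow_zero, one_mul, Real.exp_le_exp, Int.cast_abs]
  have hπ := pi_pos
  have h1 : -π * (c / π * (n : ℝ) ^ 2 - 2 * (|t| / (2 * π)) * |(n : ℝ)|)
      = |t| * |(n : ℝ)| - c * (n : ℝ) ^ 2 := by
    field_simp
    ring
  rw [h1]
  have : t * n ≤ |t| * |(n : ℝ)| := by
    calc t * n ≤ |t * n| := le_abs_self _
    _ = |t| * |(n : ℝ)| := abs_mul _ _
  linarith

lemma key_ineq (t : ℝ) {c : ℝ} (hc : 0 < c) :
    (∑' n : ℤ, Real.exp (t * n - c * n ^ 2))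
      ≤ Real.exp (t ^ 2 / (4 * c)) * ∑' n : ℤ, Real.exp (-c * n ^ 2) := by
  set a : ℝ := c / π with ha_def
  have ha : 0 < a := div_pos hc pi_pos
  set b : ℝ := t / (2 * π) with hb_def
  have hπ := pi_pos
  have hπa : π * a = c := by rw [ha_def]; field_simp
  have h2πb : 2 * π * b = t := by rw [hb_def]; field_simp
  have key := Complex.tsum_exp_neg_quadratic (a := (a : ℂ)) (by simpa using ha) (b : ℂ)
  -- LHS is real
  have hL : (∑' n : ℤ, cexp (-(π:ℂ) * a * (n:ℂ) ^ 2 + 2 * π * b * n))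
      = ((∑' n : ℤ, Real.exp (t * n - c * n ^ 2) : ℝ) : ℂ) := by
    rw [Complex.ofReal_tsum]
    congr 1; ext n
    rw [Complex.ofReal_exp]
    congr 1
    push_cast
    have e1 : (c:ℂ) = (π:ℂ) * a := by exact_mod_cast hπa.symm
    have e2 : (t:ℂ) = 2 * (π:ℂ) * b := by exact_mod_cast h2πb.symm
    linear_combination (n:ℂ) ^ 2 * e1 - (n:ℂ) * e2
  -- norms of RHS terms
  have hnorm : ∀ n : ℤ, ‖cexp (-(π:ℂ) / a * ((n:ℂ) + I * b) ^ 2)‖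
      = Real.exp (π * b ^ 2 / a) * Real.exp (-(π / a) * (n : ℝ) ^ 2) := by
    intro n
    rw [Complex.norm_exp, ← Real.exp_add]
    congr 1
    have : (-(π:ℂ) / a * ((n:ℂ) + I * b) ^ 2)
        = ((-(π / a) * ((n:ℝ)^2 - b^2) : ℝ) : ℂ) + ((-(π/a) * (2 * n * b) : ℝ)) * I := by
      push_cast
      rw [show ((n:ℂ) + I * b) ^ 2 = (n:ℂ)^2 - b^2 + (2 * n * b) * I by
        rw [show ((n:ℂ) + I*b)^2 = (n:ℂ)^2 + I^2 * b^2 + 2*n*b*I by ring, I_sq]; ring]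
      field_simp
      ring
    rw [this, Complex.add_re, Complex.ofReal_re, Complex.mul_re, Complex.ofReal_re,
      Complex.ofReal_im, Complex.I_re, Complex.I_im]
    ring
  -- summability of RHS norms
  have hsum : Summable (fun n : ℤ ↦ Real.exp (π * b ^ 2 / a) * Real.exp (-(π / a) * (n : ℝ) ^ 2)) := by
    apply Summable.mul_left
    simpa using summable_exp_lin_quad 0 (div_pos pi_pos ha)
  have hsum' : Summable (fun n : ℤ ↦ ‖cexp (-(π:ℂ) / a * ((n:ℂ) + I * b) ^ 2)‖) := by
    simpa only [hnorm] using hsum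
  -- compute
  have hS0 : (∑' n : ℤ, Real.exp (-c * (n:ℝ) ^ 2))
      = 1 / a ^ ((1:ℝ)/2) * ∑' n : ℤ, Real.exp (-π / a * (n:ℝ) ^ 2) := by
    rw [← Real.tsum_exp_neg_mul_int_sq ha]
    congr 1; ext n
    rw [← hπa]; ring_nf
  have hnn : 0 ≤ ∑' n : ℤ, Real.exp (t * n - c * n ^ 2) :=
    tsum_nonneg fun n ↦ (Real.exp_pos _).le
  have habs : (∑' n : ℤ, Real.exp (t * n - c * n ^ 2))
      = ‖(∑' n : ℤ, cexp (-(π:ℂ) * a * (n:ℂ) ^ 2 + 2 * π * b * n))‖ := by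
    rw [hL, Complex.norm_real, Real.norm_of_nonneg hnn]
  rw [habs, key]
  calc ‖1 / (a:ℂ) ^ ((1:ℂ)/2) * ∑' n : ℤ, cexp (-(π:ℂ) / a * ((n:ℂ) + I * b) ^ 2)‖
      = ‖1 / (a:ℂ) ^ ((1:ℂ)/2)‖ * ‖∑' n : ℤ, cexp (-(π:ℂ) / a * ((n:ℂ) + I * b) ^ 2)‖ :=
        norm_mul _ _
    _ ≤ (1 / a ^ ((1:ℝ)/2)) * ∑' n : ℤ, ‖cexp (-(π:ℂ) / a * ((n:ℂ) + I * b) ^ 2)‖ := by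
        apply mul_le_mul _ (norm_tsum_le_tsum_norm hsum') (norm_nonneg _)
          (by positivity)
        apply le_of_eq
        rw [norm_div, norm_one]
        congr 1
        rw [show ((1:ℂ)/2) = (((1:ℝ)/2 : ℝ) : ℂ) by norm_num,
          ← Complex.ofReal_cpow ha.le, Complex.norm_real,
          Real.norm_of_nonneg (Real.rpow_nonneg ha.le _)]
    _ = Real.exp (π * b ^ 2 / a) * (1 / a ^ ((1:ℝ)/2) * ∑' n : ℤ, Real.exp (-π / a * (n:ℝ) ^ 2)) := by
        simp only [hnorm]
        rw [tsum_mul_left]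
        simp only [neg_div]
        ring
    _ = Real.exp (t ^ 2 / (4 * c)) * ∑' n : ℤ, Real.exp (-c * (n:ℝ) ^ 2) := by
        rw [hS0]
        congr 2
        rw [hb_def, ha_def]
        field_simp
        ring

/-- The discrete Gaussian mass function `N_ℤ(v)` (real-valued) with variance
parameter `v = σ²`. -/
noncomputable def discreteGaussianPMF (v : ℝ) (x : ℤ) : ℝ :=
  Real.exp (-(x : ℝ) ^ 2 / (2 * v)) / ∑' y : ℤ, Real.exp (-(y : ℝ) ^ 2 / (2 * v))

/-- The discrete Gaussian is sub-Gaussian with parameter `σ²`: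
`E[exp (t X)] ≤ exp (σ² t² / 2)` for `X ∼ N_ℤ(σ²)`. -/
theorem discreteGaussian_subGaussian (σ : ℝ) (hσ : 0 < σ) (t : ℝ) :
    (∑' x : ℤ, Real.exp (t * (x : ℝ)) * discreteGaussianPMF (σ ^ 2) x)
      ≤ Real.exp (σ ^ 2 * t ^ 2 / 2) := by
  set c : ℝ := 1 / (2 * σ ^ 2) with hc_def
  have hc : 0 < c := by positivity
  have hexp : ∀ x : ℤ, -(x:ℝ) ^ 2 / (2 * σ ^ 2) = -c * (x:ℝ) ^ 2 := by
    intro x; rw [hc_def]; field_simp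
  have hS0pos : 0 < ∑' y : ℤ, Real.exp (-(y:ℝ) ^ 2 / (2 * σ ^ 2)) := by
    have hs : Summable (fun y : ℤ ↦ Real.exp (-(y:ℝ) ^ 2 / (2 * σ ^ 2))) := by
      simp only [hexp]
      simpa using summable_exp_lin_quad 0 hc
    exact Summable.tsum_pos hs (fun y ↦ (Real.exp_pos _).le) 0 (Real.exp_pos _)
  have hrw : (∑' x : ℤ, Real.exp (t * (x : ℝ)) * discreteGaussianPMF (σ ^ 2) x)
      = (∑' x : ℤ, Real.exp (t * (x:ℝ) - c * (x:ℝ) ^ 2))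
        / ∑' y : ℤ, Real.exp (-(y:ℝ) ^ 2 / (2 * σ ^ 2)) := by
    rw [← tsum_div_const]
    congr 1; ext x
    rw [discreteGaussianPMF, hexp x, ← mul_div_assoc, ← Real.exp_add]
    congr 2
    ring
  rw [hrw, div_le_iff₀ hS0pos]
  have hkey := key_ineq t hc
  have h4c : t ^ 2 / (4 * c) = σ ^ 2 * t ^ 2 / 2 := by
    rw [hc_def]; field_simp; ring
  calc (∑' x : ℤ, Real.exp (t * (x:ℝ) - c * (x:ℝ) ^ 2))
      ≤ Real.exp (t ^ 2 / (4 * c)) * ∑' n : ℤ, Real.exp (-c * (n:ℝ) ^ 2) := hkey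
    _ = Real.exp (σ ^ 2 * t ^ 2 / 2) * ∑' y : ℤ, Real.exp (-(y:ℝ) ^ 2 / (2 * σ ^ 2)) := by
        rw [h4c]
        congr 1
        exact tsum_congr fun y ↦ by rw [hexp y]
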